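/- arXiv:1309.5766 — 4 statements merged into one kernel-verified Lean document; each statement's English description precedes it below -/
import Mathlib

section
/- Let X = (X_t)_{t∈[0,T]} be an F-adapted process with each X_t P-integrable. If the set P(X,F) of probability measures on (Ω, F_T) equivalent to P|_{F_T} under which X is an F-martingale is a singleton, then the initial σ-algebra F_0 is P-trivial, i.e. P(A) ∈ {0,1} for every A ∈ F_0. -/
open MeasureTheory ProbabilityTheory Filter Set

noncomputable section

namespace PaperStmts

variable {Ω : Type*}

/-- The process `X` is adapted to the filtration `F` on the time interval `[0, T]`. -/
def AdaptedOn (F : ℝ → (MeasurableSpace Ω)) (X : ℝ → Ω → ℝ) (T : ℝ) : Prop :=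
  ∀ t ∈ Set.Icc (0 : ℝ) T, Measurable[F t] (X t)

/-- The process `X` is a `(Q, F)`-martingale on `[0, T]`: every `X t` is `Q`-integrable and
`E^Q[X t | F s] = X s` `Q`-a.s. for all `0 ≤ s ≤ t ≤ T`. -/
def IsMartingaleOn {mΩ : MeasurableSpace Ω} (Q : Measure Ω)
    (F : ℝ → MeasurableSpace Ω) (X : ℝ → Ω → ℝ) (T : ℝ) : Prop :=
  (∀ t ∈ Set.Icc (0 : ℝ) T, Integrable (X t) Q) ∧
    ∀ s t : ℝ, 0 ≤ s → s ≤ t → t ≤ T → (Q[X t | F s]) =ᵐ[Q] X s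

/-- The set `ℙ(X, F)` of probability measures on `(Ω, F T)` equivalent to the restriction
of `P` to `F T` under which `X` is an `F`-martingale on `[0, T]`. -/
def MartMeasures {m𝓕 : MeasurableSpace Ω} (P : Measure Ω)
    (F : ℝ → MeasurableSpace Ω) (T : ℝ) (hFT : F T ≤ m𝓕) (X : ℝ → Ω → ℝ) :
    Set (@Measure Ω (F T)) :=
  {Q | @IsProbabilityMeasure Ω (F T) Q ∧
    Q ≪ P.trim hFT ∧ P.trim hFT ≪ Q ∧ IsMartingaleOn Q F X T}

/-- The set `ℚ(X, F)` of all probability measures on `(Ω, F T)` under which `X` is an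
`F`-martingale on `[0, T]`. -/
def QMeasures (F : ℝ → MeasurableSpace Ω) (T : ℝ) (X : ℝ → Ω → ℝ) :
    Set (@Measure Ω (F T)) :=
  {Q | @IsProbabilityMeasure Ω (F T) Q ∧ IsMartingaleOn Q F X T}

/-- `Q` is an extremal point of `ℚ(X, F)`: it belongs to `ℚ(X, F)` and cannot be written as a
strictly convex combination of two elements of `ℚ(X, F)` other than trivially. -/
def IsExtremalIn (F : ℝ → MeasurableSpace Ω) (T : ℝ) (X : ℝ → Ω → ℝ)
    (Q : @Measure Ω (F T)) : Prop :=
  Q ∈ QMeasures F T X ∧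
    ∀ (α : ℝ) (Q₁ Q₂ : @Measure Ω (F T)), 0 < α → α < 1 →
      Q₁ ∈ QMeasures F T X → Q₂ ∈ QMeasures F T X →
      Q = ENNReal.ofReal α • Q₁ + ENNReal.ofReal (1 - α) • Q₂ →
      Q₁ = Q ∧ Q₂ = Q

/-- The trajectories of `X` are càdlàg on `[0, T]`: right-continuous on `[0, T)` and with
left limits on `(0, T]`. -/
def CadlagOn (X : ℝ → Ω → ℝ) (T : ℝ) : Prop :=
  ∀ ω : Ω,
    (∀ t ∈ Set.Ico (0 : ℝ) T, ContinuousWithinAt (fun s => X s ω) (Set.Ici t) t) ∧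
    (∀ t ∈ Set.Ioc (0 : ℝ) T,
      ∃ l : ℝ, Tendsto (fun s => X s ω) (nhdsWithin t (Set.Iio t)) (nhds l))

/-- `E^Q[sup_{t ∈ [0, T]} X_t ^ 2] < ∞`. -/
def SqSupIntegrable {mΩ : MeasurableSpace Ω} (Q : Measure Ω) (X : ℝ → Ω → ℝ) (T : ℝ) : Prop :=
  ∫⁻ ω, ⨆ t ∈ Set.Icc (0 : ℝ) T, ENNReal.ofReal (X t ω ^ 2) ∂Q < ⊤

/-- The family `{M t : t ∈ [0, T]}` is uniformly integrable under `Q`. -/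
def UIFamilyOn {mΩ : MeasurableSpace Ω} (Q : Measure Ω) (M : ℝ → Ω → ℝ) (T : ℝ) : Prop :=
  ∀ ε : ℝ, 0 < ε → ∃ C : ℝ, 0 ≤ C ∧ ∀ t ∈ Set.Icc (0 : ℝ) T,
    ∫⁻ ω in {ω | C ≤ |M t ω|}, ENNReal.ofReal |M t ω| ∂Q ≤ ENNReal.ofReal ε

/-- The natural filtration of the process `U`: `F^U_t = σ(U s : 0 ≤ s ≤ t)`. -/
def natFilt (U : ℝ → Ω → ℝ) (t : ℝ) : MeasurableSpace Ω :=
  ⨆ s ∈ Set.Icc (0 : ℝ) t, MeasurableSpace.comap (U s) Real.measurableSpace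

/-- If the set `ℙ(X, F)` of equivalent martingale measures for `X` is a
singleton, then the initial σ-algebra `F 0` is `P`-trivial. -/
theorem statement_9 {Ω : Type*} {m𝓕 : MeasurableSpace Ω}
    (P : Measure Ω) [IsProbabilityMeasure P]
    (T : ℝ) (hT : 0 < T)
    (F : ℝ → MeasurableSpace Ω)
    (hF_mono : ∀ s t : ℝ, s ≤ t → F s ≤ F t) (hF_le : ∀ t : ℝ, F t ≤ m𝓕)
    (X : ℝ → Ω → ℝ)
    (hX_adapted : AdaptedOn F X T)
    (hX_int : ∀ t ∈ Set.Icc (0 : ℝ) T, Integrable (X t) P)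
    (PX : @Measure Ω (F T))
    (hH1 : MartMeasures P F T (hF_le T) X = {PX}) :
    ∀ A : Set Ω, MeasurableSet[F 0] A → P A = 0 ∨ P A = 1 := by
  intro A hA
  by_contra hcon
  push_neg at hcon
  obtain ⟨h0, h1⟩ := hcon
  have hPXmem : PX ∈ MartMeasures P F T (hF_le T) X := by rw [hH1]; rfl
  obtain ⟨hPXprob, hPXac, hacPX, hPXint, hPXmart⟩ := hPXmem
  haveI := hPXprob
  have h0T : (0:ℝ) ≤ T := hT.le
  have hAT : MeasurableSet[F T] A := hF_mono 0 T h0T _ hA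
  have hμA : P.trim (hF_le T) A = P A := trim_measurableSet_eq (hF_le T) hAT
  have hμAc : P.trim (hF_le T) Aᶜ = P Aᶜ := trim_measurableSet_eq (hF_le T) hAT.compl
  -- PX A ≠ 0 and PX Aᶜ ≠ 0
  have ha0 : PX A ≠ 0 := by
    intro h; exact h0 (by rw [← hμA]; exact hacPX h)
  have hac0 : PX Aᶜ ≠ 0 := by
    intro h
    have : P Aᶜ = 0 := by rw [← hμAc]; exact hacPX h
    exact h1 (by rwa [prob_compl_eq_zero_iff (MeasurableSpace.le_def.mp (hF_le T) _ hAT)] at this)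
  have ha_top : PX A ≠ ⊤ := (measure_lt_top _ _).ne
  have hac_top : PX Aᶜ ≠ ⊤ := (measure_lt_top _ _).ne
  set c : ENNReal := 2⁻¹ with hc
  have hca_lt : c * PX A < 1 := by
    calc c * PX A ≤ c * 1 := mul_le_mul_right prob_le_one c
    _ = 2⁻¹ := mul_one c
    _ < 1 := by norm_num
  set d : ENNReal := (1 - c * PX A) / PX Aᶜ with hd
  have hd_top : d ≠ ⊤ := (ENNReal.div_lt_top (by simp [tsub_le_iff_right] : (1 : ENNReal) - c * PX A ≠ ⊤) hac0).ne
  have hd0 : d ≠ 0 := by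
    rw [hd, ENNReal.div_ne_zero]
    exact ⟨by simpa [tsub_eq_zero_iff_le] using hca_lt.not_ge, hac_top⟩
  set Q : @Measure Ω (F T) := c • PX.restrict A + d • PX.restrict Aᶜ with hQ
  -- apply of Q on measurable sets
  have hQ_apply : ∀ s : Set Ω, Q s = c * PX (s ∩ A) + d * PX (s ∩ Aᶜ) := by
    intro s
    rw [hQ, Measure.add_apply, Measure.smul_apply, Measure.smul_apply,
      Measure.restrict_apply' hAT, Measure.restrict_apply' hAT.compl, smul_eq_mul, smul_eq_mul]
  haveI hQprob : @IsProbabilityMeasure Ω (F T) Q := by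
    constructor
    rw [hQ_apply, univ_inter, univ_inter, hd,
      ENNReal.div_mul_cancel hac0 hac_top, add_tsub_cancel_of_le hca_lt.le]
  have hQmem : Q ∈ MartMeasures P F T (hF_le T) X := by
    refine ⟨hQprob, ?_, ?_, ?_, ?_⟩
    · -- Q ≪ trim
      refine Measure.AbsolutelyContinuous.trans ?_ hPXac
      intro s hs
      rw [hQ_apply]
      have h1' : PX (s ∩ A) = 0 := measure_mono_null (inter_subset_left) hs
      have h2' : PX (s ∩ Aᶜ) = 0 := measure_mono_null (inter_subset_left) hs
      simp [h1', h2']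
    · -- trim ≪ Q
      refine Measure.AbsolutelyContinuous.trans hacPX ?_
      intro s hs
      rw [hQ_apply] at hs
      have hA0 : PX (s ∩ A) = 0 := by
        have := (add_eq_zero.mp hs).1
        exact (mul_eq_zero.mp this).resolve_left (by simp [hc])
      have hAc0 : PX (s ∩ Aᶜ) = 0 := by
        have := (add_eq_zero.mp hs).2
        exact (mul_eq_zero.mp this).resolve_left hd0
      have hle : PX s ≤ 0 := by
        calc PX s ≤ PX (s ∩ A) + PX (s \ A) := measure_le_inter_add_diff _ _ _
        _ = 0 := by rw [diff_eq, hA0, hAc0, add_zero]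
      exact nonpos_iff_eq_zero.mp hle
    · -- integrability
      intro t ht
      exact ((hPXint t ht).restrict.smul_measure (by simp [hc])).add_measure
        ((hPXint t ht).restrict.smul_measure hd_top)
    · -- martingale property
      intro s t hs hst htT
      have hstT : s ≤ T := hst.trans htT
      have hm : F s ≤ F T := hF_mono s T hstT
      have hXt_int : Integrable (X t) PX := hPXint t ⟨hs.trans hst, htT⟩
      have hXtQ : Integrable (X t) Q :=
        (hXt_int.restrict.smul_measure (by simp [hc])).add_measure
          (hXt_int.restrict.smul_measure hd_top)
      have hXsm : Measurable[F s] (X s) := hX_adapted s ⟨hs, hstT⟩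
      have hXs_int : Integrable (X s) PX := hPXint s ⟨hs, hstT⟩
      have hXsQ : Integrable (X s) Q :=
        (hXs_int.restrict.smul_measure (by simp [hc])).add_measure
          (hXs_int.restrict.smul_measure hd_top)
      -- key: set integrals agree
      have key : ∀ B : Set Ω, MeasurableSet[F s] B →
          ∫ x in B, X s x ∂Q = ∫ x in B, X t x ∂Q := by
        intro B hB
        have hBT : MeasurableSet[F T] B := hm _ hB
        have hres : ∀ f : Ω → ℝ, Integrable f PX →
            ∫ x in B, f x ∂Q
              = c.toReal * ∫ x in B ∩ A, f x ∂PX + d.toReal * ∫ x in B ∩ Aᶜ, f x ∂PX := by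
          intro f hf
          rw [hQ, Measure.restrict_add, Measure.restrict_smul, Measure.restrict_smul,
            Measure.restrict_restrict hBT, Measure.restrict_restrict hBT,
            integral_add_measure ((hf.restrict).smul_measure (by simp [hc]))
              ((hf.restrict).smul_measure hd_top),
            integral_smul_measure, integral_smul_measure, smul_eq_mul, smul_eq_mul]
        have step : ∀ S' : Set Ω, MeasurableSet[F s] S' →
            ∫ x in S', X t x ∂PX = ∫ x in S', X s x ∂PX := by
          intro S' hS'
          rw [← setIntegral_condExp hm hXt_int hS']
          exact integral_congr_ae (ae_restrict_of_ae (hPXmart s t hs hst htT))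
        have hA_s : MeasurableSet[F s] A := hF_mono 0 s hs _ hA
        rw [hres (X s) hXs_int, hres (X t) hXt_int,
          step (B ∩ A) (hB.inter hA_s), step (B ∩ Aᶜ) (hB.inter hA_s.compl)]
      refine (ae_eq_condExp_of_forall_setIntegral_eq hm hXtQ
        (fun B hB _ => hXsQ.restrict)
        (fun B hB _ => key B hB)
        (StronglyMeasurable.aestronglyMeasurable (by exact hXsm.stronglyMeasurable))).symm
  -- contradiction
  have hQeq : Q = PX := by
    have := hH1 ▸ hQmem
    simpa using this
  have : Q A = c * PX A := by
    rw [hQ_apply, inter_self, inter_compl_self, measure_empty, mul_zero, add_zero]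
  rw [hQeq] at this
  have hlt : c * PX A < PX A := by
    rw [hc, ← ENNReal.div_eq_inv_mul]
    exact ENNReal.half_lt_self ha0 ha_top
  exact absurd this (ne_of_gt hlt)


end PaperStmts
end
end

section
/- Let X = (X_t)_{t∈[0,T]} be an F-adapted process. If P(X,F) is a singleton {P*}, then P* is an extremal point of Q(X,F): whenever P* = αQ₁ + (1−α)Q₂ with α ∈ (0,1) and Q₁, Q₂ ∈ Q(X,F), necessarily Q₁ = Q₂ = P*. -/
open MeasureTheory ProbabilityTheory Filter Set
open scoped ENNReal

noncomputable section

namespace PaperStmts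

variable {Ω : Type*}

lemma mix_mart {F : ℝ → MeasurableSpace Ω} {T : ℝ} {X : ℝ → Ω → ℝ}
    (hF_mono : ∀ s t : ℝ, s ≤ t → F s ≤ F t)
    (hX : AdaptedOn F X T)
    {Q₁ Q₂ : @Measure Ω (F T)}
    [IsFiniteMeasure Q₁] [IsFiniteMeasure Q₂]
    (h₁ : IsMartingaleOn Q₁ F X T) (h₂ : IsMartingaleOn Q₂ F X T)
    (a b : ℝ≥0∞) (ha : a ≠ ⊤) (hb : b ≠ ⊤) :
    IsMartingaleOn (a • Q₁ + b • Q₂) F X T := by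
  letI : MeasurableSpace Ω := F T
  set Q : @Measure Ω (F T) := a • Q₁ + b • Q₂ with hQ
  have hint : ∀ t ∈ Set.Icc (0:ℝ) T, Integrable (X t) Q := by
    intro t ht
    exact ((h₁.1 t ht).smul_measure ha).add_measure ((h₂.1 t ht).smul_measure hb)
  refine ⟨hint, fun s t hs hst htT => ?_⟩
  have hsT : s ≤ T := hst.trans htT
  have hm : F s ≤ F T := hF_mono s T hsT
  have htmem : t ∈ Set.Icc (0:ℝ) T := ⟨hs.trans hst, htT⟩
  have hsmem : s ∈ Set.Icc (0:ℝ) T := ⟨hs, hsT⟩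
  haveI : IsFiniteMeasure Q := by
    constructor
    simp only [hQ, Measure.add_apply, Measure.smul_apply, smul_eq_mul]
    exact ENNReal.add_lt_top.2 ⟨ENNReal.mul_lt_top ha.lt_top (measure_lt_top _ _),
      ENNReal.mul_lt_top hb.lt_top (measure_lt_top _ _)⟩
  have key : ∀ (μ : @Measure Ω (F T)), IsFiniteMeasure μ → IsMartingaleOn μ F X T →
      ∀ A : Set Ω, MeasurableSet[F s] A → ∫ x in A, X s x ∂μ = ∫ x in A, X t x ∂μ := by
    intro μ hμ hmart A hA
    haveI := hμ
    rw [← setIntegral_condExp hm (hmart.1 t htmem) hA]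
    exact setIntegral_congr_ae (hm A hA)
      ((hmart.2 s t hs hst htT).mono (fun x hx _ => hx.symm))
  symm
  refine ae_eq_condExp_of_forall_setIntegral_eq hm (hint t htmem)
    (fun A hA _ => ((hint s hsmem)).integrableOn) (fun A hA _ => ?_) ?_
  · have h1 : ∀ r ∈ Set.Icc (0:ℝ) T, ∫ x in A, X r x ∂Q =
        a.toReal * ∫ x in A, X r x ∂Q₁ + b.toReal * ∫ x in A, X r x ∂Q₂ := by
      intro r hr
      rw [hQ]
      rw [Measure.restrict_add, Measure.restrict_smul, Measure.restrict_smul,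
        integral_add_measure (((h₁.1 r hr).integrableOn).smul_measure ha)
          (((h₂.1 r hr).integrableOn).smul_measure hb),
        integral_smul_measure, integral_smul_measure]
      simp [smul_eq_mul]
    rw [h1 s hsmem, h1 t htmem, key Q₁ inferInstance h₁ A hA, key Q₂ inferInstance h₂ A hA]
  · exact StronglyMeasurable.aestronglyMeasurable
      ((hX s hsmem).stronglyMeasurable)


/-- key step in the proof of the second fundamental theorem of asset
pricing, Theorem 5.3 of the paper. If `ℙ(X, F)` is a singleton `{P*}`, then `P*` is an
extremal point of `ℚ(X, F)`. -/
theorem statement_10 {Ω : Type*} {m𝓕 : MeasurableSpace Ω}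
    (P : Measure Ω) [IsProbabilityMeasure P]
    (T : ℝ) (hT : 0 < T)
    (F : ℝ → MeasurableSpace Ω)
    (hF_mono : ∀ s t : ℝ, s ≤ t → F s ≤ F t) (hF_le : ∀ t : ℝ, F t ≤ m𝓕)
    (X : ℝ → Ω → ℝ)
    (hX_adapted : AdaptedOn F X T)
    (Pstar : @Measure Ω (F T))
    (hH1 : MartMeasures P F T (hF_le T) X = {Pstar}) :
    IsExtremalIn F T X Pstar := by
  have hPstar : Pstar ∈ MartMeasures P F T (hF_le T) X := by
    rw [hH1]; exact rfl
  obtain ⟨hPprob, hPac, hacP, hPmart⟩ := hPstar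
  haveI := hPprob
  refine ⟨⟨hPprob, hPmart⟩, ?_⟩
  intro α Q₁ Q₂ hα0 hα1 hQ₁ hQ₂ heq
  set a := ENNReal.ofReal α with ha_def
  set b := ENNReal.ofReal (1 - α) with hb_def
  have ha0 : a ≠ 0 := by simp [ha_def, ENNReal.ofReal_eq_zero, not_le, hα0]
  have hb0 : b ≠ 0 := by
    simp [hb_def, ENNReal.ofReal_eq_zero, not_le]; linarith
  -- Key step: any element of QMeasures absolutely continuous wrt Pstar equals Pstar.
  have key : ∀ Q : @Measure Ω (F T), Q ∈ QMeasures F T X → Q ≪ Pstar → Q = Pstar := by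
    intro Q hQmem hQac
    obtain ⟨hQprob, hQmart⟩ := hQmem
    haveI := hQprob
    set R : @Measure Ω (F T) := (1/2 : ℝ≥0∞) • Q + (1/2 : ℝ≥0∞) • Pstar with hR
    have hRprob : @IsProbabilityMeasure Ω (F T) R := by
      constructor
      simp only [hR, Measure.add_apply, Measure.smul_apply, smul_eq_mul,
        measure_univ, mul_one]
      rw [ENNReal.add_halves]
    have hRmart : IsMartingaleOn R F X T :=
      mix_mart hF_mono hX_adapted hQmart hPmart _ _ (by norm_num) (by norm_num)
    have hRmem : R ∈ MartMeasures P F T (hF_le T) X := by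
      refine ⟨hRprob, ?_, ?_, hRmart⟩
      · intro A hA
        have hPA : Pstar A = 0 := hPac hA
        have hQA : Q A = 0 := hQac hPA
        simp [hR, Measure.add_apply, Measure.smul_apply, hPA, hQA]
      · refine hacP.trans ?_
        intro A hA
        have : (1/2 : ℝ≥0∞) * Pstar A = 0 := by
          have h2 : (1/2 : ℝ≥0∞) * Pstar A ≤ R A := by
            simp only [hR, Measure.add_apply, Measure.smul_apply, smul_eq_mul]
            exact le_add_self
          exact le_antisymm (hA ▸ h2) zero_le
        simpa using this
    have hRP : R = Pstar := by
      have := hH1 ▸ hRmem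
      simpa using this
    -- conclude Q = Pstar
    letI : MeasurableSpace Ω := F T
    refine Measure.ext fun A hA => ?_
    have hA' : (1/2 : ℝ≥0∞) * Q A + (1/2 : ℝ≥0∞) * Pstar A = Pstar A := by
      have := congrArg (fun μ : @Measure Ω (F T) => μ A) hRP
      simpa [hR, Measure.add_apply, Measure.smul_apply, smul_eq_mul] using this
    have hPfin : Pstar A ≠ ⊤ := (measure_lt_top _ _).ne
    have hPsplit : Pstar A = (1/2 : ℝ≥0∞) * Pstar A + (1/2 : ℝ≥0∞) * Pstar A := by
      rw [← add_mul, ENNReal.add_halves, one_mul]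
    have hhalf : (1/2 : ℝ≥0∞) * Q A = (1/2 : ℝ≥0∞) * Pstar A := by
      have : (1/2 : ℝ≥0∞) * Q A + (1/2 : ℝ≥0∞) * Pstar A
          = (1/2 : ℝ≥0∞) * Pstar A + (1/2 : ℝ≥0∞) * Pstar A := by
        rw [hA', ← hPsplit]
      exact (ENNReal.add_left_inj (ENNReal.mul_ne_top (by norm_num) hPfin)).mp this
    exact (ENNReal.mul_right_inj (by norm_num) (by norm_num)).mp hhalf
  have hQ₁ac : Q₁ ≪ Pstar := by
    intro A hA
    have : a * Q₁ A + b * Q₂ A = 0 := by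
      have := congrArg (fun μ : @Measure Ω (F T) => μ A) heq
      simpa [Measure.add_apply, Measure.smul_apply, smul_eq_mul, hA] using this.symm
    have h1 : a * Q₁ A = 0 := by
      exact (add_eq_zero.mp this).1
    exact (mul_eq_zero.mp h1).resolve_left ha0
  have hQ₂ac : Q₂ ≪ Pstar := by
    intro A hA
    have : a * Q₁ A + b * Q₂ A = 0 := by
      have := congrArg (fun μ : @Measure Ω (F T) => μ A) heq
      simpa [Measure.add_apply, Measure.smul_apply, smul_eq_mul, hA] using this.symm
    have h1 : b * Q₂ A = 0 := (add_eq_zero.mp this).2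
    exact (mul_eq_zero.mp h1).resolve_left hb0
  haveI := hQ₁.1
  haveI := hQ₂.1
  exact ⟨key Q₁ hQ₁ hQ₁ac, key Q₂ hQ₂ hQ₂ac⟩


end PaperStmts
end
end

section
/- Let X be an F-adapted process and let Q be an extremal point of Q(X,F). Then: (a) the σ-algebra F_0 is Q-trivial, i.e. Q(A) ∈ {0,1} for every A ∈ F_0; and (b) every bounded (Q,F)-martingale N with N_0 = 0 Q-a.s. such that the product (N_t X_t)_{t∈[0,T]} is a (Q,F)-martingale satisfies N_t = 0 Q-a.s. for every t ∈ [0,T]. -/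
open MeasureTheory ProbabilityTheory Filter Set

noncomputable section

namespace PaperStmts

variable {Ω : Type*}

lemma setIntegral_eq_of_condexp_ae_eq {m0 : MeasurableSpace Ω} {μ : Measure Ω}
    [IsFiniteMeasure μ] {m : MeasurableSpace Ω} (hm : m ≤ m0) {f g : Ω → ℝ}
    (hf : Integrable f μ) (hfg : μ[f|m] =ᵐ[μ] g) {B : Set Ω} (hB : MeasurableSet[m] B) :
    ∫ x in B, f x ∂μ = ∫ x in B, g x ∂μ := by
  rw [← setIntegral_condExp hm hf hB]
  exact integral_congr_ae (ae_restrict_of_ae hfg)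

lemma IsMartingaleOn.setIntegral {F : ℝ → MeasurableSpace Ω} {T : ℝ}
    (hF_mono : ∀ s t : ℝ, s ≤ t → F s ≤ F t)
    {μ : @Measure Ω (F T)} [hμ : @IsFiniteMeasure Ω (F T) μ] {X : ℝ → Ω → ℝ}
    (hM : IsMartingaleOn μ F X T) {s t : ℝ} (hs : 0 ≤ s) (hst : s ≤ t) (htT : t ≤ T)
    {B : Set Ω} (hB : MeasurableSet[F s] B) :
    ∫ x in B, X t x ∂μ = ∫ x in B, X s x ∂μ :=
  setIntegral_eq_of_condexp_ae_eq (hF_mono s T (hst.trans htT))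
    (hM.1 t ⟨hs.trans hst, htT⟩) (hM.2 s t hs hst htT) hB

lemma isMartingaleOn_of_setIntegral {F : ℝ → MeasurableSpace Ω} {T : ℝ}
    (hF_mono : ∀ s t : ℝ, s ≤ t → F s ≤ F t) {X : ℝ → Ω → ℝ}
    (hX : AdaptedOn F X T) {μ : @Measure Ω (F T)} [@IsFiniteMeasure Ω (F T) μ]
    (hint : ∀ t ∈ Set.Icc (0:ℝ) T, Integrable (X t) μ)
    (heq : ∀ s t : ℝ, 0 ≤ s → s ≤ t → t ≤ T → ∀ B : Set Ω, MeasurableSet[F s] B →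
      ∫ x in B, X t x ∂μ = ∫ x in B, X s x ∂μ) :
    IsMartingaleOn μ F X T := by
  refine ⟨hint, fun s t hs hst htT => ?_⟩
  have hm : F s ≤ F T := hF_mono s T (hst.trans htT)
  haveI : SigmaFinite (μ.trim hm) := by
    haveI := isFiniteMeasure_trim (μ := μ) hm
    infer_instance
  refine (ae_eq_condExp_of_forall_setIntegral_eq (μ := μ) hm (hint t ⟨hs.trans hst, htT⟩)
    ?_ ?_ ?_).symm
  · exact fun B _ _ => ((hint s ⟨hs, hst.trans htT⟩).restrict (s := B))
  · exact fun B hB _ => (heq s t hs hst htT B hB).symm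
  · exact StronglyMeasurable.aestronglyMeasurable
      ((hX s ⟨hs, hst.trans htT⟩).stronglyMeasurable)

lemma cond_mem_QMeasures {F : ℝ → MeasurableSpace Ω} {T : ℝ} (hT : 0 ≤ T)
    (hF_mono : ∀ s t : ℝ, s ≤ t → F s ≤ F t) {X : ℝ → Ω → ℝ} (hX : AdaptedOn F X T)
    {Q : @Measure Ω (F T)} (hQ : Q ∈ QMeasures F T X)
    {A : Set Ω} (hA : MeasurableSet[F 0] A) (hA0 : Q A ≠ 0) :
    ((Q A)⁻¹ • Q.restrict A) ∈ QMeasures F T X := by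
  haveI : @IsProbabilityMeasure Ω (F T) Q := hQ.1
  have hAT : MeasurableSet[F T] A := hF_mono 0 T hT A hA
  have hAtop : Q A ≠ ⊤ := measure_ne_top Q A
  have hinv_top : (Q A)⁻¹ ≠ ⊤ := ENNReal.inv_ne_top.mpr hA0
  have hprob : @IsProbabilityMeasure Ω (F T) ((Q A)⁻¹ • Q.restrict A) := by
    constructor
    rw [Measure.smul_apply, Measure.restrict_apply_univ, smul_eq_mul,
      ENNReal.inv_mul_cancel hA0 hAtop]
  refine ⟨hprob, ?_⟩
  haveI := hprob
  refine isMartingaleOn_of_setIntegral hF_mono hX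
    (fun t ht => ((hQ.2.1 t ht).restrict).smul_measure hinv_top) ?_
  intro s t hs hst htT B hB
  have hBT : MeasurableSet[F T] B := hF_mono s T (hst.trans htT) B hB
  simp only [Measure.restrict_smul, integral_smul_measure,
    Measure.restrict_restrict hBT]
  congr 1
  exact hQ.2.setIntegral hF_mono hs hst htT (hB.inter (hF_mono 0 s hs A hA))

/-- (direction a) ⇒ b) of Theorem 5.1 of the paper, Jacod's extremality
theorem). If `Q` is an extremal point of `ℚ(X, F)`, then (a) `F 0` is `Q`-trivial, and
(b) every bounded `(Q, F)`-martingale `N` with `N 0 = 0` `Q`-a.s. such that `N X` is a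
`(Q, F)`-martingale vanishes: `N t = 0` `Q`-a.s. for every `t ∈ [0, T]`. -/
theorem statement_11 {Ω : Type*} {m𝓕 : MeasurableSpace Ω}
    (T : ℝ) (hT : 0 < T)
    (F : ℝ → MeasurableSpace Ω)
    (hF_mono : ∀ s t : ℝ, s ≤ t → F s ≤ F t) (hF_le : ∀ t : ℝ, F t ≤ m𝓕)
    (X : ℝ → Ω → ℝ)
    (hX_adapted : AdaptedOn F X T)
    (Q : @Measure Ω (F T))
    (hQ_ext : IsExtremalIn F T X Q) :
    (∀ A : Set Ω, MeasurableSet[F 0] A → Q A = 0 ∨ Q A = 1) ∧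
    (∀ N : ℝ → Ω → ℝ,
      AdaptedOn F N T →
      (∃ C : ℝ, ∀ t ∈ Set.Icc (0 : ℝ) T, ∀ ω, |N t ω| ≤ C) →
      IsMartingaleOn Q F N T →
      N 0 =ᵐ[Q] 0 →
      IsMartingaleOn Q F (fun t ω => N t ω * X t ω) T →
      ∀ t ∈ Set.Icc (0 : ℝ) T, N t =ᵐ[Q] 0) := by
  obtain ⟨hQmem, hQext⟩ := hQ_ext
  haveI hQprob : @IsProbabilityMeasure Ω (F T) Q := hQmem.1
  constructor
  · intro A hA
    by_contra hcon
    push_neg at hcon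
    obtain ⟨h0, h1⟩ := hcon
    have hAT : MeasurableSet[F T] A := hF_mono 0 T hT.le A hA
    have hAtop : Q A ≠ ⊤ := measure_ne_top Q A
    have hQA_le : Q A ≤ 1 := prob_le_one
    have hAc0 : Q Aᶜ ≠ 0 := by
      rw [prob_compl_eq_one_sub hAT]
      intro heq
      exact h1 (le_antisymm hQA_le (tsub_eq_zero_iff_le.mp heq))
    have hmem1 := cond_mem_QMeasures hT.le hF_mono hX_adapted hQmem hA h0
    have hmem2 := cond_mem_QMeasures hT.le hF_mono hX_adapted hQmem hA.compl hAc0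
    have hα_pos : 0 < (Q A).toReal := ENNReal.toReal_pos h0 hAtop
    have hα_lt : (Q A).toReal < 1 := by
      have hlt : Q A < 1 := lt_of_le_of_ne hQA_le h1
      have := (ENNReal.toReal_lt_toReal hAtop ENNReal.one_ne_top).mpr hlt
      simpa using this
    have hof1 : ENNReal.ofReal ((Q A).toReal) = Q A := ENNReal.ofReal_toReal hAtop
    have hof2 : ENNReal.ofReal (1 - (Q A).toReal) = Q Aᶜ := by
      rw [prob_compl_eq_one_sub hAT, ← ENNReal.toReal_one,
        ← ENNReal.toReal_sub_of_le hQA_le ENNReal.one_ne_top,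
        ENNReal.ofReal_toReal (by finiteness)]
    have hdecomp : Q = ENNReal.ofReal ((Q A).toReal) • ((Q A)⁻¹ • Q.restrict A)
        + ENNReal.ofReal (1 - (Q A).toReal) • ((Q Aᶜ)⁻¹ • Q.restrict Aᶜ) := by
      rw [hof1, hof2, smul_smul, smul_smul,
        ENNReal.mul_inv_cancel h0 hAtop,
        ENNReal.mul_inv_cancel hAc0 (measure_ne_top Q Aᶜ), one_smul, one_smul,
        Measure.restrict_add_restrict_compl hAT]
    obtain ⟨hQ1, -⟩ := hQext (Q A).toReal _ _ hα_pos hα_lt hmem1 hmem2 hdecomp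
    have : ((Q A)⁻¹ • Q.restrict A) A = 1 := by
      rw [Measure.smul_apply, Measure.restrict_apply_self, smul_eq_mul,
        ENNReal.inv_mul_cancel h0 hAtop]
    rw [hQ1] at this
    exact h1 this
  · rintro N hN_adapted ⟨C, hC⟩ hN_mart hN0 hNX_mart t ht
    have hTmem : T ∈ Set.Icc (0:ℝ) T := ⟨hT.le, le_refl T⟩
    have hNT_meas : Measurable[F T] (N T) := hN_adapted T hTmem
    have hNT_int : Integrable (N T) Q := hN_mart.1 T hTmem
    set D : ℝ := max C 1 with hDdef
    have hD1 : (1:ℝ) ≤ D := le_max_right C 1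
    have hD0 : (0:ℝ) < D := lt_of_lt_of_le one_pos hD1
    have hND : ∀ u ∈ Set.Icc (0:ℝ) T, ∀ ω, |N u ω| ≤ D :=
      fun u hu ω => (hC u hu ω).trans (le_max_left C 1)
    -- key product identity
    have key : ∀ s u : ℝ, 0 ≤ s → s ≤ u → u ≤ T → ∀ B : Set Ω, MeasurableSet[F s] B →
        ∫ x in B, X u x * N T x ∂Q = ∫ x in B, X s x * N s x ∂Q := by
      intro s u hs hsu huT B hB
      have humem : u ∈ Set.Icc (0:ℝ) T := ⟨hs.trans hsu, huT⟩
      have hmu : F u ≤ F T := hF_mono u T huT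
      have hXu_int : Integrable (X u) Q := hQmem.2.1 u humem
      have hXNT_int : Integrable (X u * N T) Q := by
        have := hXu_int.bdd_mul (c := D) hNT_meas.aestronglyMeasurable
          (ae_of_all _ fun x => by simpa [Real.norm_eq_abs] using hND T hTmem x)
        have heq : (fun x => N T x * X u x) = X u * N T := by
          funext x; simp [mul_comm]
        rwa [heq] at this
      have hpull : Q[X u * N T|F u] =ᵐ[Q] X u * Q[N T|F u] :=
        condExp_mul_of_stronglyMeasurable_left ((hX_adapted u humem).stronglyMeasurable)
          hXNT_int hNT_int
      have hcondNT : Q[N T|F u] =ᵐ[Q] N u := hN_mart.2 u T (hs.trans hsu) huT le_rfl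
      have hBu : MeasurableSet[F u] B := hF_mono s u hsu B hB
      have step1 : ∫ x in B, X u x * N T x ∂Q = ∫ x in B, X u x * N u x ∂Q := by
        have h := setIntegral_condExp hmu hXNT_int hBu
        calc ∫ x in B, X u x * N T x ∂Q = ∫ x in B, (X u * N T) x ∂Q := rfl
          _ = ∫ x in B, (Q[X u * N T|F u]) x ∂Q := h.symm
          _ = ∫ x in B, X u x * N u x ∂Q := by
              refine integral_congr_ae (ae_restrict_of_ae ?_)
              filter_upwards [hpull, hcondNT] with x h1 h2
              rw [h1, Pi.mul_apply, h2]
      have step2 : ∫ x in B, X u x * N u x ∂Q = ∫ x in B, X s x * N s x ∂Q := by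
        have := hNX_mart.setIntegral hF_mono hs hsu huT hB
        simpa [mul_comm] using this
      exact step1.trans step2
    -- expected value of N T is zero
    have hNT_zero : ∫ x, N T x ∂Q = 0 := by
      have hm0 : F 0 ≤ F T := hF_mono 0 T hT.le
      haveI : SigmaFinite (Q.trim hm0) := by
        haveI := isFiniteMeasure_trim (μ := Q) hm0
        infer_instance
      rw [← integral_condExp hm0 (f := N T)]
      rw [integral_congr_ae ((hN_mart.2 0 T le_rfl hT.le le_rfl).trans hN0)]
      simp
    -- density measures
    have hbnd : ∀ c : ℝ, |c| * D ≤ 2⁻¹ → ∀ ω, |c * N T ω| ≤ 2⁻¹ := by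
      intro c hc ω
      rw [abs_mul]
      calc |c| * |N T ω| ≤ |c| * D :=
            mul_le_mul_of_nonneg_left (hND T hTmem ω) (abs_nonneg c)
        _ ≤ 2⁻¹ := hc
    have hdens : ∀ c : ℝ, |c| * D ≤ 2⁻¹ →
        (Q.withDensity fun ω => ENNReal.ofReal (1 + c * N T ω)) ∈ QMeasures F T X ∧
        ∀ B : Set Ω, MeasurableSet[F T] B →
          (Q.withDensity fun ω => ENNReal.ofReal (1 + c * N T ω)) B
            = ENNReal.ofReal (∫ x in B, (1 + c * N T x) ∂Q) := by
      intro c hc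
      set g : Ω → ℝ := fun ω => 1 + c * N T ω with hgdef
      have hg_lb : ∀ ω, (2:ℝ)⁻¹ ≤ g ω := by
        intro ω
        have := (abs_le.mp (hbnd c hc ω)).1
        simp only [hgdef]; linarith
      have hg_ub : ∀ ω, g ω ≤ 2 := by
        intro ω
        have := (abs_le.mp (hbnd c hc ω)).2
        simp only [hgdef]; linarith
      have hg_nn : ∀ ω, (0:ℝ) ≤ g ω := fun ω => le_trans (by norm_num) (hg_lb ω)
      have hg_meas : Measurable[F T] g := measurable_const.add (hNT_meas.const_mul c)
      have hg_int : Integrable g Q := by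
        refine Integrable.mono' (integrable_const (2:ℝ)) hg_meas.aestronglyMeasurable
          (ae_of_all _ fun ω => ?_)
        rw [Real.norm_eq_abs, abs_of_nonneg (hg_nn ω)]
        exact hg_ub ω
      have happly : ∀ B : Set Ω, MeasurableSet[F T] B →
          (Q.withDensity fun ω => ENNReal.ofReal (g ω)) B
            = ENNReal.ofReal (∫ x in B, g x ∂Q) := by
        intro B hB
        rw [withDensity_apply _ hB]
        exact (ofReal_integral_eq_lintegral_ofReal hg_int.restrict
          (ae_of_all _ hg_nn)).symm
      have hint_g : ∫ x, g x ∂Q = 1 := by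
        have : Integrable (fun x => c * N T x) Q := hNT_int.const_mul c
        rw [hgdef]
        rw [integral_add (integrable_const 1) this, integral_const_mul, hNT_zero]
        simp
      have hprob : @IsProbabilityMeasure Ω (F T)
          (Q.withDensity fun ω => ENNReal.ofReal (g ω)) := by
        constructor
        rw [happly univ MeasurableSet.univ, Measure.restrict_univ, hint_g]
        simp
      refine ⟨⟨hprob, ?_⟩, happly⟩
      haveI := hprob
      have hwd_le : (Q.withDensity fun ω => ENNReal.ofReal (g ω)) ≤ (2:ENNReal) • Q := by
        have h2 : (Q.withDensity fun ω => ENNReal.ofReal (g ω))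
            ≤ Q.withDensity (fun _ => (2:ENNReal)) := by
          refine withDensity_mono (ae_of_all _ fun ω => ?_)
          calc ENNReal.ofReal (g ω) ≤ ENNReal.ofReal 2 := ENNReal.ofReal_le_ofReal (hg_ub ω)
            _ = 2 := by norm_num
        simpa [withDensity_const] using h2
      have hwd_int : ∀ u ∈ Set.Icc (0:ℝ) T,
          Integrable (X u) (Q.withDensity fun ω => ENNReal.ofReal (g ω)) :=
        fun u hu => ((hQmem.2.1 u hu).smul_measure (by norm_num)).mono_measure hwd_le
      refine isMartingaleOn_of_setIntegral hF_mono hX_adapted hwd_int ?_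
      intro s u hs hsu huT B hB
      have hBT : MeasurableSet[F T] B := hF_mono s T (hsu.trans huT) B hB
      have hwd_form : ∀ f : Ω → ℝ,
          ∫ x in B, f x ∂(Q.withDensity fun ω => ENNReal.ofReal (g ω))
            = ∫ x in B, g x * f x ∂Q := by
        intro f
        rw [restrict_withDensity hBT]
        rw [show (fun ω => ENNReal.ofReal (g ω))
          = (fun ω => ((Real.toNNReal (g ω) : NNReal) : ENNReal)) from rfl]
        rw [@integral_withDensity_eq_integral_smul Ω ℝ (F T) (Q.restrict B) _ _
          (fun ω => Real.toNNReal (g ω)) hg_meas.real_toNNReal f]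
        refine integral_congr_ae (ae_of_all _ fun x => ?_)
        simp [NNReal.smul_def, Real.coe_toNNReal _ (hg_nn x)]
      have hexp : ∀ u' : ℝ, u' ∈ Set.Icc (0:ℝ) T →
          ∫ x in B, g x * X u' x ∂Q
            = ∫ x in B, X u' x ∂Q + c * ∫ x in B, X u' x * N T x ∂Q := by
        intro u' hu'
        have hXu'_int : Integrable (X u') Q := hQmem.2.1 u' hu'
        have hXNT_int : Integrable (X u' * N T) Q := by
          have := hXu'_int.bdd_mul (c := D) hNT_meas.aestronglyMeasurable
            (ae_of_all _ fun x => by simpa [Real.norm_eq_abs] using hND T hTmem x)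
          have heq : (fun x => N T x * X u' x) = X u' * N T := by
            funext x; simp [mul_comm]
          rwa [heq] at this
        have hXNT_int' : Integrable (fun x => X u' x * N T x) Q := hXNT_int
        have hcongr : ∀ x, g x * X u' x = X u' x + c * (X u' x * N T x) := by
          intro x; simp only [hgdef]; ring
        rw [integral_congr_ae (ae_of_all _ fun x => hcongr x)]
        rw [integral_add hXu'_int.restrict ((hXNT_int'.const_mul c).restrict)]
        rw [integral_const_mul]
      rw [hwd_form (X u), hwd_form (X s)]
      rw [hexp u ⟨hs.trans hsu, huT⟩, hexp s ⟨hs, hsu.trans huT⟩]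
      rw [hQmem.2.setIntegral hF_mono hs hsu huT hB]
      rw [key s u hs hsu huT B hB, key s s hs le_rfl (hsu.trans huT) B hB]
    -- choose the density parameter
    set c : ℝ := (2*D)⁻¹ with hcdef
    have hcpos : 0 < c := by rw [hcdef]; positivity
    have hcD : |c| * D ≤ 2⁻¹ := by
      rw [abs_of_pos hcpos, hcdef]
      rw [mul_inv, mul_assoc, inv_mul_cancel₀ (ne_of_gt hD0)]
      simp
    have hcD' : |(-c)| * D ≤ 2⁻¹ := by rwa [abs_neg]
    obtain ⟨hmem1, happly1⟩ := hdens c hcD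
    obtain ⟨hmem2, happly2⟩ := hdens (-c) hcD'
    have hnn1 : ∀ B : Set Ω, 0 ≤ ∫ x in B, (1 + c * N T x) ∂Q := by
      intro B
      refine integral_nonneg fun x => ?_
      have := (abs_le.mp (hbnd c hcD x)).1
      show (0:ℝ) ≤ 1 + c * N T x
      linarith
    have hnn2 : ∀ B : Set Ω, 0 ≤ ∫ x in B, (1 + -c * N T x) ∂Q := by
      intro B
      refine integral_nonneg fun x => ?_
      have := (abs_le.mp (hbnd (-c) hcD' x)).1
      show (0:ℝ) ≤ 1 + -c * N T x
      linarith
    have hsum : ∀ B : Set Ω, MeasurableSet[F T] B →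
        (1/2 : ℝ) * ∫ x in B, (1 + c * N T x) ∂Q
          + (1/2 : ℝ) * ∫ x in B, (1 + -c * N T x) ∂Q = (Q B).toReal := by
      intro B hB
      rw [integral_add (integrable_const 1).restrict ((hNT_int.const_mul c).restrict),
        integral_add (integrable_const 1).restrict ((hNT_int.const_mul (-c)).restrict),
        integral_const_mul, integral_const_mul,
        @setIntegral_const Ω ℝ (F T) _ _ B Q _ 1]
      simp only [smul_eq_mul, mul_one, measureReal_def]
      ring
    have hdecomp : Q = ENNReal.ofReal (1/2)
        • (Q.withDensity fun ω => ENNReal.ofReal (1 + c * N T ω))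
        + ENNReal.ofReal (1 - 1/2)
        • (Q.withDensity fun ω => ENNReal.ofReal (1 + -c * N T ω)) := by
      refine @Measure.ext Ω (F T) _ _ (fun B hB => ?_)
      rw [Measure.add_apply, Measure.smul_apply, Measure.smul_apply, smul_eq_mul,
        smul_eq_mul, happly1 B hB, happly2 B hB,
        show (1 - 1/2 : ℝ) = 1/2 by norm_num,
        ← ENNReal.ofReal_mul (by norm_num : (0:ℝ) ≤ 1/2),
        ← ENNReal.ofReal_mul (by norm_num : (0:ℝ) ≤ 1/2),
        ← ENNReal.ofReal_add (mul_nonneg (by norm_num) (hnn1 B))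
          (mul_nonneg (by norm_num) (hnn2 B)),
        hsum B hB, ENNReal.ofReal_toReal (measure_ne_top Q B)]
    obtain ⟨hQ1eq, -⟩ := hQext (1/2) _ _ (by norm_num) (by norm_num) hmem1 hmem2 hdecomp
    -- N T vanishes a.e.
    have hsetNT : ∀ B : Set Ω, MeasurableSet[F T] B → ∫ x in B, N T x ∂Q = 0 := by
      intro B hB
      have h1 : ENNReal.ofReal (∫ x in B, (1 + c * N T x) ∂Q) = Q B := by
        rw [← happly1 B hB, hQ1eq]
      have h2 : ∫ x in B, (1 + c * N T x) ∂Q = (Q B).toReal := by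
        have := congrArg ENNReal.toReal h1
        rwa [ENNReal.toReal_ofReal (hnn1 B)] at this
      have h3 : ∫ x in B, (1 + c * N T x) ∂Q
          = (Q B).toReal + c * ∫ x in B, N T x ∂Q := by
        rw [integral_add (integrable_const 1).restrict ((hNT_int.const_mul c).restrict),
          integral_const_mul, @setIntegral_const Ω ℝ (F T) _ _ B Q _ 1]
        simp only [smul_eq_mul, mul_one, measureReal_def]
      have h4 : c * ∫ x in B, N T x ∂Q = 0 := by
        rw [h2] at h3
        linarith
      exact (mul_eq_zero.mp h4).resolve_left (ne_of_gt hcpos)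
    have hNTzero : N T =ᵐ[Q] 0 := by
      have hm : (F T) ≤ (F T) := le_rfl
      haveI : SigmaFinite (Q.trim hm) := by
        haveI := isFiniteMeasure_trim (μ := Q) hm
        infer_instance
      have h0c : (0 : Ω → ℝ) =ᵐ[Q] Q[N T|F T] := by
        refine ae_eq_condExp_of_forall_setIntegral_eq (μ := Q) hm hNT_int ?_ ?_ ?_
        · exact fun B _ _ => (integrable_const (0:ℝ)).restrict
        · intro B hB _
          simpa using (hsetNT B hB).symm
        · exact StronglyMeasurable.aestronglyMeasurable stronglyMeasurable_const
      have hce : Q[N T|F T] = N T :=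
        condExp_of_stronglyMeasurable hm hNT_meas.stronglyMeasurable hNT_int
      rw [hce] at h0c
      exact h0c.symm
    have h1 : Q[N T|F t] =ᵐ[Q] N t := hN_mart.2 t T ht.1 ht.2 le_rfl
    have h2 : Q[N T|F t] =ᵐ[Q] Q[(0 : Ω → ℝ)|F t] := condExp_congr_ae hNTzero
    rw [condExp_zero] at h2
    exact h1.symm.trans h2


end PaperStmts
end
end

section
/- Let X be an F-adapted process and let Q ∈ Q(X,F). Assume that the σ-algebra F_0 is Q-trivial and that every bounded (Q,F)-martingale Z with Z_0 = 0 Q-a.s. such that (Z_t X_t)_{t∈[0,T]} is a (Q,F)-martingale satisfies Z_t = 0 Q-a.s. for all t ∈ [0,T]. Then Q is an extremal point of Q(X,F). -/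
open MeasureTheory ProbabilityTheory Filter Set

noncomputable section

namespace PaperStmts

variable {Ω : Type*}

/-- (direction b) ⇒ a) of Theorem 5.1 of the paper, Jacod's extremality
theorem). Let `Q ∈ ℚ(X, F)`. If `F 0` is `Q`-trivial and every bounded `(Q, F)`-martingale
`Z` with `Z 0 = 0` `Q`-a.s. such that `Z X` is a `(Q, F)`-martingale vanishes, then `Q` is an
extremal point of `ℚ(X, F)`. -/
theorem statement_12 {Ω : Type*} {m𝓕 : MeasurableSpace Ω}
    (T : ℝ) (hT : 0 < T)
    (F : ℝ → MeasurableSpace Ω)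
    (hF_mono : ∀ s t : ℝ, s ≤ t → F s ≤ F t) (hF_le : ∀ t : ℝ, F t ≤ m𝓕)
    (X : ℝ → Ω → ℝ)
    (hX_adapted : AdaptedOn F X T)
    (Q : @Measure Ω (F T))
    (hQ_mem : Q ∈ QMeasures F T X)
    (hF0_trivial : ∀ A : Set Ω, MeasurableSet[F 0] A → Q A = 0 ∨ Q A = 1)
    (hvanish : ∀ Z : ℝ → Ω → ℝ,
      AdaptedOn F Z T →
      (∃ C : ℝ, ∀ t ∈ Set.Icc (0 : ℝ) T, ∀ ω, |Z t ω| ≤ C) →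
      IsMartingaleOn Q F Z T →
      Z 0 =ᵐ[Q] 0 →
      IsMartingaleOn Q F (fun t ω => Z t ω * X t ω) T →
      ∀ t ∈ Set.Icc (0 : ℝ) T, Z t =ᵐ[Q] 0) :
    IsExtremalIn F T X Q := by
  classical
  clear hF_le
  clear m𝓕
  letI : MeasurableSpace Ω := F T
  refine ⟨hQ_mem, ?_⟩
  intro α Q₁ Q₂ hα0 hα1 hQ₁ hQ₂ hdecomp
  obtain ⟨hQ_prob, hQ_int, hQ_mart⟩ := hQ_mem
  obtain ⟨hQ₁_prob, hQ₁_int, hQ₁_mart⟩ := hQ₁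
  obtain ⟨hQ₂_prob, hQ₂_int, hQ₂_mart⟩ := hQ₂
  haveI := hQ_prob; haveI := hQ₁_prob; haveI := hQ₂_prob
  have hm : ∀ s : ℝ, s ≤ T → F s ≤ F T := fun s hs => hF_mono s T hs
  have happ : ∀ s : Set Ω, Q s = ENNReal.ofReal α * Q₁ s + ENNReal.ofReal (1 - α) * Q₂ s := by
    intro s
    rw [hdecomp]
    simp [Measure.add_apply, Measure.smul_apply, smul_eq_mul]
  have hαne : ENNReal.ofReal α ≠ 0 := by
    simp [ENNReal.ofReal_eq_zero, not_le, hα0]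
  have habs : Q₁ ≪ Q := by
    intro s hs
    have h := happ s
    rw [hs] at h
    have h1 : ENNReal.ofReal α * Q₁ s = 0 := by
      have := (add_eq_zero.mp h.symm).1
      exact this
    rcases mul_eq_zero.mp h1 with h2 | h2
    · exact absurd h2 hαne
    · exact h2
  set g : Ω → ℝ := fun ω => (Q₁.rnDeriv Q ω).toReal with hg_def
  have hg_meas : Measurable[F T] g := (Measure.measurable_rnDeriv Q₁ Q).ennreal_toReal
  have hg_int : Integrable g Q := Measure.integrable_toReal_rnDeriv
  have hg_nonneg : ∀ ω, 0 ≤ g ω := fun ω => ENNReal.toReal_nonneg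
  have hαinv_pos : (0:ℝ) < α⁻¹ := inv_pos.mpr hα0
  have hαinv1 : (1:ℝ) ≤ α⁻¹ := one_le_inv_iff₀.mpr ⟨hα0, hα1.le⟩
  have hg_bdd : ∀ᵐ ω ∂Q, g ω ≤ α⁻¹ := by
    have hle : (ENNReal.ofReal α • Q₁ : @Measure Ω (F T)) ≤ Q := by
      refine Measure.le_intro fun s hs _ => ?_
      rw [Measure.smul_apply, smul_eq_mul, happ s]
      exact le_add_right le_rfl
    have h1 := Measure.rnDeriv_le_one_of_le hle
    have h2 := Measure.rnDeriv_smul_left_of_ne_top Q₁ Q (r := ENNReal.ofReal α)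
      ENNReal.ofReal_ne_top
    filter_upwards [h1, h2] with ω hω1 hω2
    rw [hω2] at hω1
    simp only [Pi.smul_apply, smul_eq_mul, Pi.one_apply] at hω1
    have h3 : Q₁.rnDeriv Q ω ≤ (ENNReal.ofReal α)⁻¹ := by
      rw [ENNReal.le_inv_iff_mul_le, mul_comm]
      exact hω1
    calc g ω ≤ ((ENNReal.ofReal α)⁻¹).toReal :=
          ENNReal.toReal_mono (by simp [hαne]) h3
      _ = α⁻¹ := by rw [ENNReal.toReal_inv, ENNReal.toReal_ofReal hα0.le]
  have hchg : ∀ (f : Ω → ℝ) (A : Set Ω), MeasurableSet[F T] A →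
      ∫ ω in A, f ω * g ω ∂Q = ∫ ω in A, f ω ∂Q₁ := by
    intro f A hA
    have h := MeasureTheory.setIntegral_rnDeriv_smul habs hA (f := f)
    rw [← h]
    refine setIntegral_congr_ae (μ := Q) hA (Filter.Eventually.of_forall fun ω _ => ?_)
    simp [hg_def, smul_eq_mul, mul_comm]
  have hXmeas : ∀ t ∈ Set.Icc (0:ℝ) T, Measurable[F T] (X t) :=
    fun t ht => (hX_adapted t ht).mono (hF_mono t T ht.2) le_rfl
  have hmul_int : ∀ t ∈ Set.Icc (0:ℝ) T, Integrable (fun ω => X t ω * g ω) Q := by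
    intro t ht
    refine Integrable.mono' ((hQ_int t ht).abs.const_mul α⁻¹)
      ((hXmeas t ht).mul hg_meas).aestronglyMeasurable ?_
    filter_upwards [hg_bdd] with ω hω
    rw [Real.norm_eq_abs, abs_mul, abs_of_nonneg (hg_nonneg ω)]
    calc |X t ω| * g ω ≤ |X t ω| * α⁻¹ := by
          exact mul_le_mul_of_nonneg_left hω (abs_nonneg _)
      _ = α⁻¹ * |X t ω| := mul_comm _ _
  -- bounds on conditional expectations of g
  have hce_nonneg : ∀ s : ℝ, s ≤ T → (0:Ω → ℝ) ≤ᵐ[Q] Q[g|F s] := fun s hs =>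
    condExp_nonneg (Filter.Eventually.of_forall hg_nonneg)
  have hce_bdd : ∀ s : ℝ, s ≤ T → (Q[g|F s]) ≤ᵐ[Q] fun _ => α⁻¹ := by
    intro s hs
    have h1 : (Q[g|F s]) ≤ᵐ[Q] Q[(fun _ => α⁻¹)|F s] :=
      condExp_mono hg_int (integrable_const _) hg_bdd
    have h2 : Q[(fun _ => α⁻¹)|F s] = fun _ => α⁻¹ := condExp_const (hm s hs) _
    rw [h2] at h1
    exact h1
  set Z : ℝ → Ω → ℝ := fun t ω => max (-α⁻¹) (min α⁻¹ ((Q[g|F t]) ω - 1)) with hZ_def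
  have hZ_eq : ∀ s : ℝ, s ≤ T → Z s =ᵐ[Q] fun ω => (Q[g|F s]) ω - 1 := by
    intro s hs
    filter_upwards [hce_nonneg s hs, hce_bdd s hs] with ω h0 h1
    have h0' : (0:ℝ) ≤ (Q[g|F s]) ω := h0
    simp only [hZ_def]
    rw [min_eq_right (by linarith), max_eq_right (by linarith)]
  have hZ_bdd : ∀ t ω, |Z t ω| ≤ α⁻¹ := by
    intro t ω
    refine abs_le.mpr ⟨le_max_left _ _, max_le (by linarith) (min_le_left _ _)⟩
  have hZ_meas : ∀ t : ℝ, Measurable[F t] (Z t) := by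
    intro t
    exact measurable_const.max
      (measurable_const.min (stronglyMeasurable_condExp.measurable.sub measurable_const))
  have hZ_measT : ∀ t : ℝ, t ≤ T → Measurable[F T] (Z t) :=
    fun t ht => (hZ_meas t).mono (hm t ht) le_rfl
  have hZ_int : ∀ t : ℝ, t ≤ T → Integrable (Z t) Q := by
    intro t ht
    refine Integrable.mono' (integrable_const α⁻¹)
      (hZ_measT t ht).aestronglyMeasurable
      (Filter.Eventually.of_forall fun ω => ?_)
    rw [Real.norm_eq_abs]
    exact hZ_bdd t ω
  -- the key pull-out computation
  have hkey : ∀ s t : ℝ, 0 ≤ s → s ≤ t → t ≤ T →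
      (fun ω => X s ω * (Q[g|F s]) ω) =ᵐ[Q] Q[(fun ω => X t ω * g ω)|F s] := by
    intro s t hs0 hst htT
    have hsT : s ≤ T := hst.trans htT
    have hsIcc : s ∈ Set.Icc (0:ℝ) T := ⟨hs0, hsT⟩
    have htIcc : t ∈ Set.Icc (0:ℝ) T := ⟨hs0.trans hst, htT⟩
    have h_int_cand : Integrable (fun ω => X s ω * (Q[g|F s]) ω) Q := by
      refine Integrable.mono' ((hQ_int s hsIcc).abs.const_mul α⁻¹)
        ((hXmeas s hsIcc).mul
          (stronglyMeasurable_condExp.measurable.mono (hm s hsT) le_rfl)).aestronglyMeasurable ?_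
      filter_upwards [hce_nonneg s hsT, hce_bdd s hsT] with ω h0 h1
      rw [Real.norm_eq_abs, abs_mul, abs_of_nonneg h0, mul_comm (α⁻¹)]
      exact mul_le_mul_of_nonneg_left h1 (abs_nonneg _)
    have hpull : Q[(fun ω => X s ω * g ω)|F s] =ᵐ[Q] fun ω => X s ω * (Q[g|F s]) ω := by
      have := condExp_mul_of_stronglyMeasurable_left (μ := Q) (m := F s)
        ((hX_adapted s hsIcc).stronglyMeasurable) (g := g) ?hfg hg_int
      · exact this
      case hfg => exact hmul_int s hsIcc
    refine ae_eq_condExp_of_forall_setIntegral_eq (hm s hsT) (hmul_int t htIcc)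
      (fun A hA hAfin => h_int_cand.integrableOn) (fun A hA hAfin => ?_)
      (((hX_adapted s hsIcc).stronglyMeasurable.mul
        stronglyMeasurable_condExp).aestronglyMeasurable)
    have hA' : MeasurableSet[F T] A := hm s hsT A hA
    calc ∫ ω in A, X s ω * (Q[g|F s]) ω ∂Q
        = ∫ ω in A, (Q[(fun ω => X s ω * g ω)|F s]) ω ∂Q := by
          refine setIntegral_congr_ae (μ := Q) hA' ?_
          filter_upwards [hpull] with ω hω _
          exact hω.symm
      _ = ∫ ω in A, X s ω * g ω ∂Q := setIntegral_condExp (hm s hsT) (hmul_int s hsIcc) hA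
      _ = ∫ ω in A, X s ω ∂Q₁ := hchg (X s) A hA'
      _ = ∫ ω in A, (Q₁[X t|F s]) ω ∂Q₁ := by
          refine setIntegral_congr_ae (μ := Q₁) hA' ?_
          filter_upwards [hQ₁_mart s t hs0 hst htT] with ω hω _
          exact hω.symm
      _ = ∫ ω in A, X t ω ∂Q₁ := setIntegral_condExp (hm s hsT) (hQ₁_int t htIcc) hA
      _ = ∫ ω in A, X t ω * g ω ∂Q := (hchg (X t) A hA').symm
  -- Z is a martingale
  have hZ_mart : IsMartingaleOn Q F Z T := by
    refine ⟨fun t ht => hZ_int t ht.2, fun s t hs0 hst htT => ?_⟩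
    have hsT : s ≤ T := hst.trans htT
    calc Q[Z t|F s] =ᵐ[Q] Q[(fun ω => (Q[g|F t]) ω - 1)|F s] :=
          condExp_congr_ae (hZ_eq t htT)
      _ =ᵐ[Q] Q[Q[g|F t]|F s] - Q[(fun _ => (1:ℝ))|F s] :=
          condExp_sub integrable_condExp (integrable_const 1) _
      _ =ᵐ[Q] fun ω => (Q[g|F s]) ω - 1 := by
          have h1 : Q[Q[g|F t]|F s] =ᵐ[Q] Q[g|F s] :=
            condExp_condExp_of_le (hF_mono s t hst) (hm t htT)
          have h2 : Q[(fun _ => (1:ℝ))|F s] = fun _ => (1:ℝ) := condExp_const (hm s hsT) _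
          filter_upwards [h1] with ω hω
          simp [Pi.sub_apply, hω, h2]
      _ =ᵐ[Q] Z s := (hZ_eq s hsT).symm
  -- Z 0 = 0 a.s.
  have hce0 : (fun _ : Ω => (1:ℝ)) =ᵐ[Q] Q[g|F 0] := by
    refine ae_eq_condExp_of_forall_setIntegral_eq (hm 0 hT.le) hg_int
      (fun A hA hAfin => (integrable_const 1).integrableOn) (fun A hA hAfin => ?_)
      (stronglyMeasurable_const.aestronglyMeasurable)
    have hA' : MeasurableSet[F T] A := hm 0 hT.le A hA
    have hQQ₁ : Q₁ A = Q A := by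
      rcases hF0_trivial A hA with h0 | h1
      · rw [h0, habs h0]
      · have hc : Q Aᶜ = 0 := by
          have := measure_compl hA' (measure_ne_top Q A)
          rw [h1] at this
          simp [this, measure_univ]
        have hc1 : Q₁ Aᶜ = 0 := habs hc
        have h2 : Q₁ A = 1 := by
          have hcc := measure_compl (μ := Q₁) hA' (measure_ne_top Q₁ A)
          rw [hc1, measure_univ] at hcc
          exact le_antisymm prob_le_one (tsub_eq_zero_iff_le.mp hcc.symm)
        rw [h2, h1]
    have hL : ∫ _ in A, (1:ℝ) ∂Q = (Q A).toReal := by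
      rw [setIntegral_const, smul_eq_mul, mul_one]; rfl
    have hR : ∫ ω in A, g ω ∂Q = (Q₁ A).toReal :=
      Measure.setIntegral_toReal_rnDeriv habs A
    rw [hL, hR, hQQ₁]
  have hZ0 : Z 0 =ᵐ[Q] 0 := by
    filter_upwards [hZ_eq 0 hT.le, hce0] with ω h1 h2
    simp only [Pi.zero_apply]
    rw [h1, ← h2]
    ring
  -- Z X is a martingale
  have hZX_mart : IsMartingaleOn Q F (fun t ω => Z t ω * X t ω) T := by
    constructor
    · intro t ht
      refine Integrable.mono' ((hQ_int t ht).abs.const_mul α⁻¹)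
        ((hZ_measT t ht.2).mul (hXmeas t ht)).aestronglyMeasurable
        (Filter.Eventually.of_forall fun ω => ?_)
      rw [Real.norm_eq_abs, abs_mul]
      exact mul_le_mul_of_nonneg_right (hZ_bdd t ω) (abs_nonneg _)
    · intro s t hs0 hst htT
      have hsT : s ≤ T := hst.trans htT
      have hsIcc : s ∈ Set.Icc (0:ℝ) T := ⟨hs0, hsT⟩
      have htIcc : t ∈ Set.Icc (0:ℝ) T := ⟨hs0.trans hst, htT⟩
      have h_int1 : Integrable (fun ω => X t ω * (Q[g|F t]) ω) Q := by
        refine Integrable.mono' ((hQ_int t htIcc).abs.const_mul α⁻¹)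
          ((hXmeas t htIcc).mul
            (stronglyMeasurable_condExp.measurable.mono (hm t htT) le_rfl)).aestronglyMeasurable ?_
        filter_upwards [hce_nonneg t htT, hce_bdd t htT] with ω h0 h1
        rw [Real.norm_eq_abs, abs_mul, abs_of_nonneg h0, mul_comm (α⁻¹)]
        exact mul_le_mul_of_nonneg_left h1 (abs_nonneg _)
      have hpull_t : Q[(fun ω => X t ω * g ω)|F t] =ᵐ[Q] fun ω => X t ω * (Q[g|F t]) ω := by
        have := condExp_mul_of_stronglyMeasurable_left (μ := Q) (m := F t)
          ((hX_adapted t htIcc).stronglyMeasurable) (hmul_int t htIcc) hg_int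
        exact this
      calc Q[(fun ω => Z t ω * X t ω)|F s]
          =ᵐ[Q] Q[(fun ω => X t ω * (Q[g|F t]) ω - X t ω)|F s] := by
            refine condExp_congr_ae ?_
            filter_upwards [hZ_eq t htT] with ω hω
            rw [hω]; ring
        _ =ᵐ[Q] Q[(fun ω => X t ω * (Q[g|F t]) ω)|F s] - Q[X t|F s] :=
            condExp_sub h_int1 (hQ_int t htIcc) _
        _ =ᵐ[Q] fun ω => X s ω * (Q[g|F s]) ω - X s ω := by
            have h1 : Q[(fun ω => X t ω * (Q[g|F t]) ω)|F s]
                =ᵐ[Q] Q[Q[(fun ω => X t ω * g ω)|F t]|F s] :=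
              condExp_congr_ae hpull_t.symm
            have h2 : Q[Q[(fun ω => X t ω * g ω)|F t]|F s]
                =ᵐ[Q] Q[(fun ω => X t ω * g ω)|F s] :=
              condExp_condExp_of_le (hF_mono s t hst) (hm t htT)
            have h3 := (hkey s t hs0 hst htT).symm
            have h4 := hQ_mart s t hs0 hst htT
            filter_upwards [h1, h2, h3, h4] with ω hω1 hω2 hω3 hω4
            simp only [Pi.sub_apply]
            rw [hω1, hω2, hω3, hω4]
        _ =ᵐ[Q] fun ω => Z s ω * X s ω := by
            filter_upwards [hZ_eq s hsT] with ω hω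
            rw [hω]; ring
  -- apply the hypothesis
  have hZT : Z T =ᵐ[Q] 0 := by
    refine hvanish Z (fun t ht => hZ_meas t) ⟨α⁻¹, fun t ht ω => hZ_bdd t ω⟩
      hZ_mart hZ0 hZX_mart T ⟨hT.le, le_rfl⟩
  -- conclude g = 1 a.e.
  have hceT : Q[g|F T] = g := by
    haveI : SigmaFinite (Q.trim (le_refl (F T))) := by
      rw [@trim_eq_self Ω (F T) Q]; infer_instance
    exact condExp_of_stronglyMeasurable (le_refl (F T)) hg_meas.stronglyMeasurable hg_int
  have hg1 : g =ᵐ[Q] fun _ => 1 := by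
    filter_upwards [hZT, hZ_eq T le_rfl] with ω h1 h2
    have : (Q[g|F T]) ω - 1 = 0 := by
      rw [← h2, h1]; rfl
    rw [hceT] at this
    linarith
  have hrn1 : Q₁.rnDeriv Q =ᵐ[Q] fun _ => (1:ENNReal) := by
    filter_upwards [hg1, Measure.rnDeriv_lt_top Q₁ Q] with ω h1 h2
    have h3 : Q₁.rnDeriv Q ω = ENNReal.ofReal ((Q₁.rnDeriv Q ω).toReal) :=
      (ENNReal.ofReal_toReal h2.ne).symm
    rw [h3, show (Q₁.rnDeriv Q ω).toReal = g ω from rfl, h1]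
    simp
  have hQ₁Q : Q₁ = Q := by
    have h1 : Q.withDensity (Q₁.rnDeriv Q) = Q₁ := Measure.withDensity_rnDeriv_eq Q₁ Q habs
    rw [← h1, withDensity_congr_ae hrn1]
    simpa using withDensity_one (μ := Q)
  refine ⟨hQ₁Q, ?_⟩
  -- now Q₂ = Q
  refine Measure.ext fun A hA => ?_
  have h := happ A
  rw [hQ₁Q] at h
  have hsum : ENNReal.ofReal α + ENNReal.ofReal (1 - α) = 1 := by
    rw [← ENNReal.ofReal_add hα0.le (by linarith)]
    norm_num
  have h' : ENNReal.ofReal α * Q A + ENNReal.ofReal (1 - α) * Q A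
      = ENNReal.ofReal α * Q A + ENNReal.ofReal (1 - α) * Q₂ A := by
    rw [← add_mul, hsum, one_mul]
    exact h
  have hfin : ENNReal.ofReal α * Q A ≠ ⊤ :=
    ENNReal.mul_ne_top ENNReal.ofReal_ne_top (measure_ne_top Q A)
  have h'' : ENNReal.ofReal (1 - α) * Q A = ENNReal.ofReal (1 - α) * Q₂ A :=
    (ENNReal.add_right_inj hfin).mp h'
  have hβne : ENNReal.ofReal (1 - α) ≠ 0 := by
    simp only [ne_eq, ENNReal.ofReal_eq_zero, not_le]
    linarith
  exact ((ENNReal.mul_right_inj hβne ENNReal.ofReal_ne_top).mp h'').symm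

end PaperStmts
end
end
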